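/- In the setup below, if V₁⁻ is infinite then V₁⁻ ≺ U₁, i.e., every wall of U₁ crosses all but finitely many walls of V₁⁻. -/
import Mathlib


open Set

variable {X : Type*}

/-- A wall: a subset with nonempty complement and nonempty itself. -/
def IsWall (h : Set X) : Prop := h.Nonempty ∧ hᶜ.Nonempty

/-- Walls `h` and `k` cross. -/
def Crosses (h k : Set X) : Prop :=
  (h ∩ k).Nonempty ∧ (h ∩ kᶜ).Nonempty ∧ (hᶜ ∩ k).Nonempty ∧ (hᶜ ∩ kᶜ).Nonempty

/-- The wall `u` lies in the halfspace `H` of the wall `w`. -/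
def LiesIn (u H w : Set X) : Prop := u ≠ w ∧ (u ⊆ H ∨ uᶜ ⊆ H)

/-- The wall `w` separates the walls `u` and `v`. -/
def Separates (w u v : Set X) : Prop :=
  u ≠ v ∧ u ≠ w ∧ v ≠ w ∧
  ∃ u' v' w', (u' = u ∨ u' = uᶜ) ∧ (v' = v ∨ v' = vᶜ) ∧ (w' = w ∨ w' = wᶜ) ∧
    u' ⊆ w' ∧ v' ⊆ w'ᶜ

/-- `S` contains a facing triple. -/
def HasFacingTriple (S : Set (Set X)) : Prop :=
  ∃ a ∈ S, ∃ b ∈ S, ∃ c ∈ S, a ≠ b ∧ a ≠ c ∧ b ≠ c ∧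
    ∃ a' b' c', (a' = a ∨ a' = aᶜ) ∧ (b' = b ∨ b' = bᶜ) ∧ (c' = c ∨ c' = cᶜ) ∧
      Disjoint a' b' ∧ Disjoint a' c' ∧ Disjoint b' c'

/-- `S` is inseparable with respect to the wall collection `W`. -/
def InseparableIn (W S : Set (Set X)) : Prop :=
  ∀ u ∈ S, ∀ v ∈ S, ∀ w ∈ W, Separates w u v → w ∈ S

/-- `S` is unidirectional: for each wall `w ∈ S`, at most one of the two halfspaces of `w`
contains infinitely many walls of `S`. -/
def Unidirectional (S : Set (Set X)) : Prop :=
  ∀ w ∈ S, {u ∈ S | LiesIn u w w}.Finite ∨ {u ∈ S | LiesIn u wᶜ w}.Finite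

/-- `V` is a UBS in the wall collection `W`. -/
def IsUBS (W V : Set (Set X)) : Prop :=
  V ⊆ W ∧ V.Infinite ∧ InseparableIn W V ∧ Unidirectional V ∧ ¬ HasFacingTriple V

/-- Almost-equivalence of sets of walls. -/
def AlmostEq (S T : Set (Set X)) : Prop := (S \ T).Finite ∧ (T \ S).Finite

/-- `U` is a minimal UBS in `W`. -/
def MinUBS (W U : Set (Set X)) : Prop :=
  IsUBS W U ∧ ∀ U', IsUBS W U' → U' ⊆ U → AlmostEq U' U

/-- `A ≺ B`: every wall of `B` crosses all but finitely many walls of `A`. -/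
def Prec (A B : Set (Set X)) : Prop := ∀ b ∈ B, {a ∈ A | ¬ Crosses b a}.Finite

/-- Distinct members of `W` determine distinct partitions. -/
def Admissible (W : Set (Set X)) : Prop := ∀ h ∈ W, ∀ k ∈ W, h ≠ k → h ≠ kᶜ

/-- No infinite subset of `W` consists of pairwise-crossing walls. -/
def NoInfCross (W : Set (Set X)) : Prop := ∀ S ⊆ W, S.Pairwise Crosses → S.Finite

/-- `W` has dimension at most `D`: every pairwise-crossing subset has cardinality at most `D`. -/
def DimLE (W : Set (Set X)) (D : ℕ) : Prop :=
  ∀ S ⊆ W, S.Pairwise Crosses → S.Finite ∧ S.ncard ≤ D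

/-- `c` is a chain: an injective sequence of walls with `c n` separating `c (n-1)` and
`c (n+1)` for `n ≥ 1`. -/
def IsChainSeq (c : ℕ → Set X) : Prop :=
  Function.Injective c ∧ ∀ n, Separates (c (n + 1)) (c n) (c (n + 2))

/-- The chain `c` is inextensible in `S`: no wall of `S` has a halfspace containing every
term of `c`. -/
def InextensibleIn (S : Set (Set X)) (c : ℕ → Set X) : Prop :=
  ¬ ∃ w ∈ S, ∃ H, (H = w ∨ H = wᶜ) ∧ ∀ n, LiesIn (c n) H w

/-- The inseparable closure in `W` of a set `C` of walls. -/
def insepClosure (W C : Set (Set X)) : Set (Set X) :=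
  ⋂₀ {S | C ⊆ S ∧ S ⊆ W ∧ InseparableIn W S}

/-- The sub-collection of `V ∖ U₁` (where `U₁` is the inseparable closure of the chain `c`)
consisting of walls crossing all but finitely many walls of `U₁`. -/
def V1plus (W V : Set (Set X)) (c : ℕ → Set X) : Set (Set X) :=
  {v ∈ V \ insepClosure W (Set.range c) |
    {u ∈ insepClosure W (Set.range c) | ¬ Crosses v u}.Finite}

/-- The complement of `V₁⁺` in `V₁ = V ∖ U₁`. -/
def V1minus (W V : Set (Set X)) (c : ℕ → Set X) : Set (Set X) :=
  (V \ insepClosure W (Set.range c)) \ V1plus W V c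

/-- If `V₁⁻` is infinite then `V₁⁻ ≺ U₁`. -/
theorem v1minus_prec_U1 (W : Set (Set X))
    (hWc : W.Countable) (hWwall : ∀ h ∈ W, IsWall h)
    (hWadm : Admissible W) (hWnic : NoInfCross W)
    (V : Set (Set X)) (hV : IsUBS W V)
    (c : ℕ → Set X) (hc : IsChainSeq c) (hcV : ∀ n, c n ∈ V)
    (hinext : InextensibleIn V c)
    (hU1min : MinUBS W (insepClosure W (Set.range c)))
    (hU1V : insepClosure W (Set.range c) ⊆ V)
    (hinf : (V1minus W V c).Infinite) :
    Prec (V1minus W V c) (insepClosure W (Set.range c)) := by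
  classical
  obtain ⟨hVW, hVinf, hVinsep, hVuni, hVnoFT⟩ := hV
  obtain ⟨hcinj, hcsep⟩ := hc
  -- basic facts about the chain walls
  have hcW : ∀ n, c n ∈ W := fun n => hVW (hcV n)
  have hcne : ∀ n, (c n).Nonempty := fun n => (hWwall _ (hcW n)).1
  have hccne : ∀ n, ((c n)ᶜ).Nonempty := fun n => (hWwall _ (hcW n)).2
  have hccne' : ∀ m n : ℕ, c m ≠ (c n)ᶜ := by
    intro m n hEq
    by_cases hmn : m = n
    · subst hmn
      obtain ⟨t, ht⟩ := hcne m
      have ht2 : t ∈ (c m)ᶜ := by rw [← hEq]; exact ht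
      exact ht2 ht
    · exact hWadm _ (hcW m) _ (hcW n) (fun h2 => hmn (hcinj h2)) hEq
  -- small generic helpers
  have two_sided : ∀ {a b : Set X}, a ⊆ b → a ⊆ bᶜ → a.Nonempty → False := by
    intro a b h1 h2 hne
    obtain ⟨t, ht⟩ := hne
    exact h2 ht (h1 ht)
  have halfcases : ∀ {x a b : Set X}, (a = x ∨ a = xᶜ) → (b = x ∨ b = xᶜ) →
      a = b ∨ a = bᶜ := by
    intro x a b ha hb
    rcases ha with rfl | rfl <;> rcases hb with rfl | rfl <;> simp [compl_compl]
  have notCross : ∀ {x y : Set X}, ¬ Crosses x y →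
      ∃ a b, (a = x ∨ a = xᶜ) ∧ (b = y ∨ b = yᶜ) ∧ a ∩ b = ∅ := by
    intro x y hxy
    by_cases h1 : (x ∩ y).Nonempty
    · by_cases h2 : (x ∩ yᶜ).Nonempty
      · by_cases h3 : (xᶜ ∩ y).Nonempty
        · by_cases h4 : (xᶜ ∩ yᶜ).Nonempty
          · exact absurd ⟨h1, h2, h3, h4⟩ hxy
          · exact ⟨xᶜ, yᶜ, Or.inr rfl, Or.inr rfl, Set.not_nonempty_iff_eq_empty.mp h4⟩
        · exact ⟨xᶜ, y, Or.inr rfl, Or.inl rfl, Set.not_nonempty_iff_eq_empty.mp h3⟩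
      · exact ⟨x, yᶜ, Or.inl rfl, Or.inr rfl, Set.not_nonempty_iff_eq_empty.mp h2⟩
    · exact ⟨x, y, Or.inl rfl, Or.inl rfl, Set.not_nonempty_iff_eq_empty.mp h1⟩
  have cross_component : ∀ {x y a b : Set X}, Crosses x y →
      (a = x ∨ a = xᶜ) → (b = y ∨ b = yᶜ) → (a ∩ b).Nonempty := by
    rintro x y a b ⟨h1, h2, h3, h4⟩ (rfl | rfl) (rfl | rfl)
    exacts [h1, h2, h3, h4]
  have hdisj1 : ∀ {a b : Set X}, a ⊆ bᶜ → Disjoint a b :=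
    fun h => Set.disjoint_left.mpr (fun t ht htb => h ht htb)
  have hdisj2 : ∀ {a b : Set X}, a ⊆ b → Disjoint a bᶜ :=
    fun h => Set.disjoint_left.mpr (fun t ht htb => htb (h ht))
  -- the monotone sequence of halfspaces associated to the chain
  have hexists : ∃ h : ℕ → Set X,
      (∀ n, h n = c n ∨ h n = (c n)ᶜ) ∧ ∀ n, h n ⊆ h (n + 1) := by
    have H : ∀ n, ∃ a k b2, (a = c n ∨ a = (c n)ᶜ) ∧ (k = c (n+1) ∨ k = (c (n+1))ᶜ) ∧
        (b2 = c (n+2) ∨ b2 = (c (n+2))ᶜ) ∧ a ⊆ k ∧ b2 ⊆ kᶜ := by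
      intro n
      obtain ⟨-, -, -, u', v', w', hu', hv', hw', h1, h2⟩ := hcsep n
      exact ⟨u', w', v', hu', hw', hv', h1, h2⟩
    choose A K B hA hK hB hAK hBK using H
    let f : ℕ → Set X := fun n => match n with
      | 0 => A 0
      | 1 => K 0
      | (m+2) => (B m)ᶜ
    have hfh : ∀ n, f n = c n ∨ f n = (c n)ᶜ := by
      intro n
      rcases n with _ | (_ | m)
      · exact hA 0
      · exact hK 0
      · rcases hB m with h1 | h1
        · exact Or.inr (by show (B m)ᶜ = _; rw [h1])
        · exact Or.inl (by show (B m)ᶜ = _; rw [h1, compl_compl])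
    have hfne : ∀ n, (f n).Nonempty := by
      intro n
      rcases hfh n with h1 | h1 <;> rw [h1]
      · exact hcne n
      · exact hccne n
    have hmonoF : ∀ n, f n ⊆ f (n+1) := by
      intro n
      induction n with
      | zero => exact hAK 0
      | succ m ih =>
        rcases m with _ | p
        · exact fun t ht htb => hBK 0 htb ht
        · rcases halfcases (hK (p+1)) (hfh (p+2)) with hk2 | hk2
          · intro t ht htb
            have ht' : t ∈ K (p+1) := by rw [hk2]; exact ht
            exact hBK (p+1) htb ht'
          · exfalso
            rcases halfcases (hA (p+1)) (hfh (p+1)) with hA2 | hA2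
            · have hthis := hAK (p+1)
              rw [hA2, hk2] at hthis
              exact two_sided ih hthis (hfne (p+1))
            · have hthis := hAK (p+1)
              rw [hA2, hk2] at hthis
              have h2 : f (p+2) ⊆ f (p+1) := fun t ht => by
                by_contra ht1
                exact hthis ht1 ht
              have hEq : f (p+1) = f (p+2) := Set.Subset.antisymm ih h2
              rcases hfh (p+1) with e1 | e1 <;> rcases hfh (p+2) with e2 | e2 <;>
                rw [e1, e2] at hEq
              · exact hcinj.ne (by omega : (p+1 : ℕ) ≠ p+2) hEq
              · exact hccne' _ _ hEq
              · exact hccne' _ _ hEq.symm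
              · exact hcinj.ne (by omega : (p+1 : ℕ) ≠ p+2) (compl_inj_iff.mp hEq)
    exact ⟨f, hfh, hmonoF⟩
  obtain ⟨h, hhalf, hmono1⟩ := hexists
  have hmono : ∀ {m n : ℕ}, m ≤ n → h m ⊆ h n := by
    intro m n hmn
    exact monotone_nat_of_le_succ hmono1 hmn
  have hne : ∀ n, (h n).Nonempty := by
    intro n
    rcases hhalf n with h1 | h1 <;> rw [h1]
    · exact hcne n
    · exact hccne n
  have hcne2 : ∀ n, ((h n)ᶜ).Nonempty := by
    intro n
    rcases hhalf n with h1 | h1 <;> rw [h1]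
    · exact hccne n
    · rw [compl_compl]; exact hcne n
  have hval : ∀ {m n : ℕ}, h m = h n → m = n := by
    intro m n hEq
    rcases hhalf m with h1 | h1 <;> rcases hhalf n with h2 | h2 <;> rw [h1, h2] at hEq
    · exact hcinj hEq
    · exact absurd hEq (hccne' m n)
    · exact absurd hEq.symm (hccne' n m)
    · exact hcinj (compl_inj_iff.mp hEq)
  -- facts about the inseparable closure U1
  have hU1W : insepClosure W (Set.range c) ⊆ W :=
    Set.sInter_subset_of_mem ⟨fun t ht => by obtain ⟨n, rfl⟩ := ht; exact hcW n,
      subset_rfl, fun _ _ _ _ w hw _ => hw⟩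
  have hranU1 : Set.range c ⊆ insepClosure W (Set.range c) :=
    Set.subset_sInter (fun S hS => hS.1)
  have hU1insep : InseparableIn W (insepClosure W (Set.range c)) := hU1min.1.2.2.1
  -- structure of U1: every wall of U1 is a chain wall or separates two chain walls
  have extract : ∀ x ∈ (Set.range c ∪ {w | w ∈ W ∧ ∃ i j, Separates w (c i) (c j)}),
      ∀ {x' w' : Set X}, (x' = x ∨ x' = xᶜ) → x' ⊆ w' →
      ∃ i p, (p = c i ∨ p = (c i)ᶜ) ∧ p ⊆ w' := by
    rintro x (⟨i, rfl⟩ | ⟨hxW, i, j, hsep⟩) x' w' hx' hsub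
    · exact ⟨i, x', hx', hsub⟩
    · obtain ⟨-, -, -, p, q, x2, hp, hq, hx2, hpx, hqx⟩ := hsep
      rcases halfcases hx2 hx' with hEq | hEq
      · exact ⟨i, p, hp, fun t ht => hsub (by rw [← hEq]; exact hpx ht)⟩
      · refine ⟨j, q, hq, fun t ht => hsub ?_⟩
        have h2 := hqx ht
        rw [hEq, compl_compl] at h2
        exact h2
  have hRinsep : InseparableIn W
      (Set.range c ∪ {w | w ∈ W ∧ ∃ i j, Separates w (c i) (c j)}) := by
    intro x hx y hy w hw hsep
    obtain ⟨hxy, hxw, hyw, x', y', w', hx', hy', hw', hxs, hys⟩ := hsep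
    obtain ⟨i, p, hp, hpw⟩ := extract x hx hx' hxs
    obtain ⟨j, q, hq, hqw⟩ := extract y hy hy' hys
    by_cases hwi : w = c i
    · exact Or.inl ⟨i, hwi.symm⟩
    by_cases hwj : w = c j
    · exact Or.inl ⟨j, hwj.symm⟩
    by_cases hij : i = j
    · exfalso
      subst hij
      rcases halfcases hp hq with hpq | hpq
      · have h1 : p ⊆ w'ᶜ := by rw [hpq]; exact hqw
        have hpne : p.Nonempty := by
          rcases hp with rfl | rfl
          · exact hcne i
          · exact hccne i
        exact two_sided hpw h1 hpne
      · have h1 : w' ⊆ qᶜ := fun t ht htq => hqw htq ht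
        have h1' : w' ⊆ p := by rw [hpq]; exact h1
        have h2 : w' = p := Set.Subset.antisymm h1' hpw
        rcases hw' with hwe | hwe
        · rcases hp with hpc | hpc
          · exact hwi (by rw [← hwe, h2, hpc])
          · exact hWadm w hw (c i) (hcW i) hwi (by rw [← hwe, h2, hpc])
        · have hwp : w = pᶜ := by rw [← compl_compl w, ← hwe, h2]
          rcases hp with hpc | hpc
          · exact hWadm w hw (c i) (hcW i) hwi (by rw [hwp, hpc])
          · exact hwi (by rw [hwp, hpc, compl_compl])
    · refine Or.inr ⟨hw, i, j, hcinj.ne hij, fun hE => hwi hE.symm, fun hE => hwj hE.symm,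
        p, q, w', hp, hq, hw', hpw, hqw⟩
  have hU1R : insepClosure W (Set.range c) ⊆
      (Set.range c ∪ {w | w ∈ W ∧ ∃ i j, Separates w (c i) (c j)}) := by
    apply Set.sInter_subset_of_mem
    refine ⟨fun t ht => Or.inl ht, ?_, hRinsep⟩
    rintro t (⟨n, rfl⟩ | ⟨htW, -⟩)
    · exact hcW n
    · exact htW
  -- L5 : every wall of U1 has a halfspace contained in some h I
  have hL5 : ∀ u ∈ insepClosure W (Set.range c),
      ∃ us, (us = u ∨ us = uᶜ) ∧ ∃ I, us ⊆ h I := by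
    intro u hu
    rcases hU1R hu with ⟨k, rfl⟩ | ⟨huW, i, j, hsep⟩
    · exact ⟨h k, hhalf k, k, subset_rfl⟩
    · obtain ⟨-, -, -, p, q, w2, hp, hq, hw2, hpw, hqw⟩ := hsep
      rcases halfcases hp (hhalf i) with hp' | hp' <;>
        rcases halfcases hq (hhalf j) with hq' | hq'
      · exfalso
        have h1 : h i ⊆ w2 := by rw [← hp']; exact hpw
        have h2 : h j ⊆ w2ᶜ := by rw [← hq']; exact hqw
        exact two_sided ((hmono (min_le_left i j)).trans h1)
          ((hmono (min_le_right i j)).trans h2) (hne (min i j))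
      · refine ⟨w2, hw2, j, fun t ht => ?_⟩
        by_contra htj
        have h2 : (h j)ᶜ ⊆ w2ᶜ := by rw [← hq']; exact hqw
        exact h2 htj ht
      · refine ⟨w2ᶜ, ?_, i, fun t ht => ?_⟩
        · rcases hw2 with hE | hE
          · exact Or.inr (by rw [hE])
          · exact Or.inl (by rw [hE, compl_compl])
        · by_contra hti
          have h1 : (h i)ᶜ ⊆ w2 := by rw [← hp']; exact hpw
          exact ht (h1 hti)
      · refine ⟨w2, hw2, j, fun t ht => ?_⟩
        by_contra htj
        have h2 : (h j)ᶜ ⊆ w2ᶜ := by rw [← hq']; exact hqw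
        exact h2 htj ht
  -- a chain wall far beyond I cannot equal u
  have hcnne_u : ∀ {u us : Set X} {I : ℕ}, (us = u ∨ us = uᶜ) → us ⊆ h I →
      ∀ n, I < n → c n ≠ u := by
    intro u us I hus hsub n hIn hEq
    subst hEq
    rcases halfcases hus (hhalf n) with h1 | h1
    · have hE : h n = h I := Set.Subset.antisymm (by rw [← h1]; exact hsub) (hmono hIn.le)
      have := hval hE
      omega
    · have h2 : (h n)ᶜ ⊆ h n := (by rw [← h1]; exact hsub : (h n)ᶜ ⊆ h I).trans (hmono hIn.le)
      exact two_sided h2 subset_rfl (hcne2 n)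
  -- hereditary properties of subsets of V
  have huni_sub : ∀ {S : Set (Set X)}, S ⊆ V → Unidirectional S := by
    intro S hS w hw
    rcases hVuni w (hS hw) with hf | hf
    · exact Or.inl (hf.subset (fun t ht => ⟨hS ht.1, ht.2⟩))
    · exact Or.inr (hf.subset (fun t ht => ⟨hS ht.1, ht.2⟩))
  have hnoFT_sub : ∀ {S : Set (Set X)}, S ⊆ V → ¬ HasFacingTriple S := by
    intro S hS hFT
    obtain ⟨a, ha, b, hb, c3, hc3, hrest⟩ := hFT
    exact hVnoFT ⟨a, hS ha, b, hS hb, c3, hS hc3, hrest⟩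
  -- every wall of V₁⁻ crosses only finitely many walls of U1
  have hCvfin : ∀ v, v ∈ V → v ∉ insepClosure W (Set.range c) →
      ¬ ({w | w ∈ insepClosure W (Set.range c) ∧ ¬ Crosses v w}.Finite) →
      {w | w ∈ insepClosure W (Set.range c) ∧ Crosses v w}.Finite := by
    intro v hvV hvnU hnf
    by_contra hinfCv
    have hsubU1 : {w | w ∈ insepClosure W (Set.range c) ∧ Crosses v w} ⊆
        insepClosure W (Set.range c) := fun t ht => ht.1
    have hUBS : IsUBS W {w | w ∈ insepClosure W (Set.range c) ∧ Crosses v w} := by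
      refine ⟨fun t ht => hU1W ht.1, hinfCv, ?_, huni_sub (fun t ht => hU1V (hsubU1 ht)),
        hnoFT_sub (fun t ht => hU1V (hsubU1 ht))⟩
      intro x hx y hy w hw hsep2
      have hwU1 : w ∈ insepClosure W (Set.range c) := hU1insep x hx.1 y hy.1 w hw hsep2
      refine ⟨hwU1, ?_⟩
      by_contra hncr2
      obtain ⟨a2, b2, ha2, hb2, hab2⟩ := notCross hncr2
      obtain ⟨-, -, -, x', y', w', hx', hy', hw', hxs, hys⟩ := hsep2
      have hb2sub : ∀ {t : X}, t ∈ b2 → t ∉ a2 :=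
        fun {t} ht hta => Set.notMem_empty t (by rw [← hab2]; exact ⟨hta, ht⟩)
      rcases halfcases hb2 hw' with hE | hE
      · obtain ⟨t, ht1, ht2⟩ := cross_component hx.2 ha2 hx'
        exact hb2sub (by rw [hE]; exact hxs ht2) ht1
      · obtain ⟨t, ht1, ht2⟩ := cross_component hy.2 ha2 hy'
        have hy2 : y' ⊆ b2 := by rw [hE]; exact hys
        exact hb2sub (hy2 ht2) ht1
    have hae := hU1min.2 _ hUBS hsubU1
    apply hnf
    apply hae.2.subset
    intro t ht
    exact ⟨ht.1, fun hC => ht.2 hC.2⟩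
  -- main argument
  intro u huU1
  obtain ⟨us, hus, I, husub⟩ := hL5 u huU1
  have huV : u ∈ V := hU1V huU1
  -- the tail of the chain lies on the usᶜ side of u
  have hinfside : {x | x ∈ V ∧ LiesIn x usᶜ u}.Infinite := by
    have hmem : ∀ k : ℕ, c (I + 1 + k) ∈ {x | x ∈ V ∧ LiesIn x usᶜ u} := by
      intro k
      refine ⟨hcV _, hcnne_u hus husub _ (by omega), ?_⟩
      have hsub2 : (h (I+1+k))ᶜ ⊆ usᶜ :=
        fun t ht hts => ht (hmono (by omega : I ≤ I+1+k) (husub hts))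
      rcases hhalf (I+1+k) with h1 | h1
      · refine Or.inr ?_
        rw [← h1]; exact hsub2
      · refine Or.inl ?_
        have hE : c (I+1+k) = (h (I+1+k))ᶜ := by rw [h1, compl_compl]
        rw [hE]; exact hsub2
    have hinj2 : Function.Injective (fun k : ℕ => c (I + 1 + k)) := by
      intro a b hab
      have := hcinj hab
      omega
    exact (Set.infinite_range_of_injective hinj2).mono (Set.range_subset_iff.mpr hmem)
  have hFinfin : {x | x ∈ V ∧ LiesIn x us u}.Finite := by
    have hinf2 := hinfside
    rcases hus with hE | hE
    · rw [hE] at hinf2 ⊢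
      rcases hVuni u huV with hf | hf
      · exact hf
      · exact absurd hf hinf2
    · rw [hE] at hinf2 ⊢
      rw [compl_compl] at hinf2
      rcases hVuni u huV with hf | hf
      · exact absurd hf hinf2
      · exact hf
  apply hFinfin.subset
  rintro v ⟨hvm, hncr⟩
  obtain ⟨⟨hvV, hvnU⟩, hvnp⟩ := hvm
  have hvW : v ∈ W := hVW hvV
  have huv : u ≠ v := fun hE => hvnU (hE ▸ huU1)
  obtain ⟨al, bb, hal, hbb, halbb⟩ := notCross hncr
  rcases halfcases hal hus with haleq | haleq
  · -- al = us : this leads to a contradiction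
    exfalso
    have hnotfin : ¬ {w | w ∈ insepClosure W (Set.range c) ∧ ¬ Crosses v w}.Finite :=
      fun hf => hvnp ⟨⟨hvV, hvnU⟩, hf⟩
    have hCvf := hCvfin v hvV hvnU hnotfin
    have hSfin : {n : ℕ | Crosses v (c n)}.Finite := by
      have hpre : (c ⁻¹' {w | w ∈ insepClosure W (Set.range c) ∧ Crosses v w}).Finite :=
        hCvf.preimage (Set.injOn_of_injective hcinj)
      exact hpre.subset (fun n hn => ⟨hranU1 ⟨n, rfl⟩, hn⟩)
    obtain ⟨N, hN⟩ := hSfin.bddAbove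
    have hncrn : ∀ n, max (N+1) (I+1) ≤ n → ¬ Crosses v (c n) := by
      intro n hn hcr
      have := hN hcr
      omega
    have hεhalf : bbᶜ = v ∨ bbᶜ = vᶜ := by
      rcases hbb with hE | hE
      · exact Or.inr (by rw [hE])
      · exact Or.inl (by rw [hE, compl_compl])
    have halε : us ⊆ bbᶜ := by
      rw [← haleq]
      exact fun t ht htb => Set.notMem_empty t (by rw [← halbb]; exact ⟨ht, htb⟩)
    have hside : ∀ n, max (N+1) (I+1) ≤ n → h n ⊆ bbᶜ ∨ (h n)ᶜ ⊆ bbᶜ := by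
      intro n hMn
      obtain ⟨τ, p, hτ, hp, hτp⟩ := notCross (hncrn n hMn)
      have hpsub : p ⊆ τᶜ :=
        fun t ht hta => Set.notMem_empty t (by rw [← hτp]; exact ⟨hta, ht⟩)
      rcases halfcases hτ hεhalf with hE | hE
      · -- τ = bbᶜ : v separates u and c n, contradiction
        exfalso
        have hpsub' : p ⊆ (bbᶜ)ᶜ := by rw [← hE]; exact hpsub
        have hsep3 : Separates v u (c n) := by
          refine ⟨(hcnne_u hus husub n (by omega)).symm, huv,
            fun hE2 => hvnU (hE2 ▸ hranU1 ⟨n, rfl⟩), us, p, bbᶜ, hus, hp, hεhalf,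
            halε, hpsub'⟩
        exact hvnU (hU1insep u huU1 (c n) (hranU1 ⟨n, rfl⟩) v hvW hsep3)
      · have hpsub' : p ⊆ bbᶜ := by
          rw [hE] at hpsub
          rwa [compl_compl] at hpsub
        rcases halfcases hp (hhalf n) with hE2 | hE2
        · exact Or.inl (by rw [← hE2]; exact hpsub')
        · exact Or.inr (by rw [hE2] at hpsub'; exact hpsub')
    by_cases hex : ∃ n, max (N+1) (I+1) ≤ n ∧ (h n)ᶜ ⊆ bbᶜ
    · -- facing triple u, v, c (n+1)
      obtain ⟨n, hMn, hnn⟩ := hex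
      apply hVnoFT
      have hbbh : bb ⊆ h n := fun t ht => by
        by_contra htn
        exact hnn htn ht
      refine ⟨u, huV, v, hvV, c (n+1), hcV (n+1), huv,
        (hcnne_u hus husub (n+1) (by omega)).symm,
        fun hE2 => hvnU (hE2 ▸ hranU1 ⟨n+1, rfl⟩),
        us, bb, (h (n+1))ᶜ, hus, hbb, ?_, hdisj1 halε, hdisj2 (husub.trans (hmono (by omega))),
        hdisj2 (hbbh.trans (hmono (by omega)))⟩
      rcases hhalf (n+1) with hE2 | hE2
      · exact Or.inr (by rw [hE2])
      · exact Or.inl (by rw [hE2, compl_compl])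
    · -- the whole chain lies on the bbᶜ side of v : contradicts inextensibility
      apply hinext
      have hsideall : ∀ n, max (N+1) (I+1) ≤ n → h n ⊆ bbᶜ :=
        fun n hn => (hside n hn).resolve_right (fun hcc => hex ⟨n, hn, hcc⟩)
      refine ⟨v, hvV, bbᶜ, hεhalf, fun k => ⟨fun hE2 => hvnU (hE2 ▸ hranU1 ⟨k, rfl⟩), ?_⟩⟩
      have hk : h k ⊆ bbᶜ :=
        (hmono (le_max_left k (max (N+1) (I+1)))).trans
          (hsideall (max k (max (N+1) (I+1))) (le_max_right _ _))
      rcases hhalf k with hE2 | hE2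
      · exact Or.inl (by rw [← hE2]; exact hk)
      · exact Or.inr (by rw [← hE2]; exact hk)
  · -- al = usᶜ : v lies on the us side of u
    have hbbsub : bb ⊆ us := by
      have h1 : bb ⊆ alᶜ :=
        fun t ht hta => Set.notMem_empty t (by rw [← halbb]; exact ⟨hta, ht⟩)
      rw [haleq, compl_compl] at h1
      exact h1
    refine ⟨hvV, fun hE => hvnU (hE ▸ huU1), ?_⟩
    rcases hbb with hE | hE
    · exact Or.inl (by rw [← hE]; exact hbbsub)
    · exact Or.inr (by rw [← hE]; exact hbbsub)
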